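/- If p_1 = p_2 + 1 with p_2 > 1, then for every cut point c ∈ [0,1) the two-party apportionment sequence over one period is the alternating sequence 1, 2, 1, 2, ..., 1 (p_2 pairs '1,2' followed by a final 1), while for c = 1 it is 1, 2, 1, 2, ..., 1, 1, 2 (p_2 − 1 pairs then 1,1,2). -/

import Mathlib

open ENNReal

/-- Number of seats party `i` holds after the first `h` seats of sequence `s`. -/
def alloc {n : ℕ} (s : ℕ → Fin n) (i : Fin n) (h : ℕ) : ℕ :=
  ((Finset.range h).filter (fun t => s t = i)).card

/-- `s` is the apportionment sequence of the stationary divisor method with cut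
point `c` for votes `p`: each seat goes to the party maximizing `pᵢ/(aᵢ+c)`
(computed in `ℝ≥0∞`, so that `pᵢ/0 = ∞` encodes the Adams convention), with
ties broken in favor of the smaller index. -/
def IsStationarySeq {n : ℕ} (p : Fin n → ℕ) (c : NNReal) (s : ℕ → Fin n) : Prop :=
  ∀ h : ℕ, ∀ j : Fin n,
    (p j : ℝ≥0∞) / ((alloc s j h : ℝ≥0∞) + (c : ℝ≥0∞)) <
        (p (s h) : ℝ≥0∞) / ((alloc s (s h) h : ℝ≥0∞) + (c : ℝ≥0∞)) ∨
    ((p (s h) : ℝ≥0∞) / ((alloc s (s h) h : ℝ≥0∞) + (c : ℝ≥0∞)) =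
        (p j : ℝ≥0∞) / ((alloc s j h : ℝ≥0∞) + (c : ℝ≥0∞)) ∧ s h ≤ j)

lemma alloc_succ {n : ℕ} (s : ℕ → Fin n) (i : Fin n) (h : ℕ) :
    alloc s i (h+1) = alloc s i h + if s h = i then 1 else 0 := by
  unfold alloc
  rw [Finset.range_add_one, Finset.filter_insert]
  split
  · rw [Finset.card_insert_of_notMem (by simp)]
  · simp

lemma fin2_cases (x : Fin 2) : x = 0 ∨ x = 1 := by revert x; decide

lemma step_eq_zero {p2 : ℕ} {c : NNReal} {s : ℕ → Fin 2}
    (hs : IsStationarySeq ![p2 + 1, p2] c s) (h : ℕ)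
    (H : ((p2 : ℕ) : ℝ≥0∞) / ((alloc s 1 h : ℝ≥0∞) + (c : ℝ≥0∞)) ≤
         ((p2 + 1 : ℕ) : ℝ≥0∞) / ((alloc s 0 h : ℝ≥0∞) + (c : ℝ≥0∞))) : s h = 0 := by
  rcases fin2_cases (s h) with h0 | h1
  · exact h0
  · exfalso
    have h2 := hs h 0
    rw [h1] at h2
    simp only [Matrix.cons_val_zero, Matrix.cons_val_one, Matrix.head_cons] at h2
    rcases h2 with hlt | ⟨_, hle⟩
    · exact absurd hlt (not_lt.mpr H)
    · exact absurd hle (by decide)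

lemma step_eq_one {p2 : ℕ} {c : NNReal} {s : ℕ → Fin 2}
    (hs : IsStationarySeq ![p2 + 1, p2] c s) (h : ℕ)
    (H : ((p2 + 1 : ℕ) : ℝ≥0∞) / ((alloc s 0 h : ℝ≥0∞) + (c : ℝ≥0∞)) <
         ((p2 : ℕ) : ℝ≥0∞) / ((alloc s 1 h : ℝ≥0∞) + (c : ℝ≥0∞))) : s h = 1 := by
  rcases fin2_cases (s h) with h0 | h1
  · exfalso
    have h2 := hs h 1
    rw [h0] at h2
    simp only [Matrix.cons_val_zero, Matrix.cons_val_one, Matrix.head_cons] at h2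
    rcases h2 with hlt | ⟨heq, _⟩
    · exact absurd hlt (not_lt.mpr H.le)
    · exact absurd heq (ne_of_lt H)
  · exact h1

lemma coe_div_lt_coe_div {a c : ℕ} {b d : NNReal} (hb : b ≠ 0) (hd : d ≠ 0)
    (h : (a : NNReal) * d < (c : NNReal) * b) :
    (a : ℝ≥0∞) / (b : ℝ≥0∞) < (c : ℝ≥0∞) / (d : ℝ≥0∞) := by
  rw [show ((a : ℕ) : ℝ≥0∞) = (((a : ℕ) : NNReal) : ℝ≥0∞) by norm_cast,
      show ((c : ℕ) : ℝ≥0∞) = (((c : ℕ) : NNReal) : ℝ≥0∞) by norm_cast,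
      ← ENNReal.coe_div hb, ← ENNReal.coe_div hd, ENNReal.coe_lt_coe,
      div_lt_div_iff₀ (pos_iff_ne_zero.mpr hb) (pos_iff_ne_zero.mpr hd)]
  exact h

lemma odd_cmp {p2 k : ℕ} {c : NNReal} (hp2 : p2 ≠ 0) (hk : (k : NNReal) + c < p2) :
    ((p2 + 1 : ℕ) : ℝ≥0∞) / (((k + 1 : ℕ) : ℝ≥0∞) + (c : ℝ≥0∞)) <
      ((p2 : ℕ) : ℝ≥0∞) / (((k : ℕ) : ℝ≥0∞) + (c : ℝ≥0∞)) := by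
  have hd1 : ((k : NNReal) + 1 + c) ≠ 0 := by positivity
  have e1 : ((k + 1 : ℕ) : ℝ≥0∞) + (c : ℝ≥0∞) = (((k : NNReal) + 1 + c : NNReal) : ℝ≥0∞) := by
    push_cast; ring
  have e2 : ((k : ℕ) : ℝ≥0∞) + (c : ℝ≥0∞) = (((k : NNReal) + c : NNReal) : ℝ≥0∞) := by
    push_cast; ring
  by_cases h0 : (k : NNReal) + c = 0
  · rw [e2, h0, ENNReal.coe_zero, ENNReal.div_zero (by exact_mod_cast hp2)]
    rw [e1]
    exact ENNReal.div_lt_top (by simp) (by exact_mod_cast hd1)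
  · rw [e1, e2]
    apply coe_div_lt_coe_div hd1 h0
    have key : ((p2 : NNReal) + 1) * ((k : NNReal) + c) < (p2 : NNReal) * ((k : NNReal) + 1 + c) := by
      calc ((p2 : NNReal) + 1) * ((k : NNReal) + c)
          = (p2 : NNReal) * ((k : NNReal) + c) + ((k : NNReal) + c) := by ring
        _ < (p2 : NNReal) * ((k : NNReal) + c) + p2 := (add_lt_add_iff_left _).mpr hk
        _ = (p2 : NNReal) * ((k : NNReal) + 1 + c) := by ring
    calc ((p2 + 1 : ℕ) : NNReal) * ((k : NNReal) + c)
        = ((p2 : NNReal) + 1) * ((k : NNReal) + c) := by push_cast; ring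
      _ < (p2 : NNReal) * ((k : NNReal) + 1 + c) := key
      _ = ((p2 : ℕ) : NNReal) * ((k : NNReal) + 1 + c) := by rfl

lemma nat_div_lt {a b c d : ℕ} (hb : b ≠ 0) (hd : d ≠ 0) (h : a * d < c * b) :
    (a : ℝ≥0∞) / (b : ℝ≥0∞) < (c : ℝ≥0∞) / (d : ℝ≥0∞) := by
  have := coe_div_lt_coe_div (a := a) (c := c) (b := (b : NNReal)) (d := (d : NNReal))
    (Nat.cast_ne_zero.mpr hb) (Nat.cast_ne_zero.mpr hd) (by exact_mod_cast h)
  simpa using this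

/-- For consecutive vote totals `p_1 = p_2 + 1` with `p_2 > 1`: for every cut
point `c ∈ [0,1)` one period of the two-party sequence is the alternating
sequence `1,2,1,2,…,1` (of length `2p_2+1`), while for `c = 1` it is
`1,2,…,1,2,1,1,2` (`p_2 − 1` pairs `1,2` followed by `1,1,2`).  Parties are
indexed `0` (votes `p_2+1`) and `1` (votes `p_2`). -/
theorem consecutive_votes_sequence (p2 : ℕ) (hp2 : 1 < p2)
    (c : NNReal) (hc : c ≤ 1) (s : ℕ → Fin 2)
    (hs : IsStationarySeq ![p2 + 1, p2] c s) :
    (c < 1 → ∀ t, t < 2 * p2 + 1 → s t = if t % 2 = 0 then 0 else 1) ∧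
    (c = 1 → ∀ t, t < 2 * p2 + 1 →
      s t = if t = 2 * p2 then 1 else
        if t < 2 * p2 - 2 then (if t % 2 = 0 then 0 else 1) else 0) := by
  have hp2' : p2 ≠ 0 := by omega
  have key : ∀ t, t ≤ 2 * p2 - 1 →
      alloc s 0 t = (t + 1) / 2 ∧ alloc s 1 t = t / 2 ∧
      ∀ u < t, s u = if u % 2 = 0 then 0 else 1 := by
    intro t
    induction t with
    | zero => exact fun _ => ⟨by simp [alloc], by simp [alloc], by omega⟩
    | succ t ih =>
      intro ht
      obtain ⟨a0, a1, hp⟩ := ih (by omega)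
      have hst : s t = if t % 2 = 0 then 0 else 1 := by
        by_cases he : t % 2 = 0
        · rw [if_pos he]
          apply step_eq_zero hs
          have h01 : alloc s 1 t = alloc s 0 t := by omega
          rw [h01]
          exact ENNReal.div_le_div_right (by exact_mod_cast Nat.le_succ p2) _
        · rw [if_neg he]
          apply step_eq_one hs
          have hk0 : alloc s 0 t = t / 2 + 1 := by omega
          have hk1 : alloc s 1 t = t / 2 := by omega
          rw [hk0, hk1]
          apply odd_cmp hp2'
          have hb : t / 2 + 1 < p2 := by omega
          calc ((t / 2 : ℕ) : NNReal) + c ≤ ((t / 2 : ℕ) : NNReal) + 1 := (add_le_add_iff_left _).mpr hc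
            _ = ((t / 2 + 1 : ℕ) : NNReal) := by push_cast; ring
            _ < (p2 : NNReal) := by exact_mod_cast hb
      refine ⟨?_, ?_, ?_⟩
      · rw [alloc_succ, hst, a0]
        by_cases he : t % 2 = 0 <;> simp [he] <;> omega
      · rw [alloc_succ, hst, a1]
        by_cases he : t % 2 = 0 <;> simp [he] <;> omega
      · intro u hu
        rcases Nat.lt_succ_iff_lt_or_eq.mp hu with h | rfl
        · exact hp u h
        · exact hst
  obtain ⟨A0, A1, hpat⟩ := key (2 * p2 - 1) le_rfl
  constructor
  · intro hclt t ht
    have s1 : s (2 * p2 - 1) = 1 := by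
      apply step_eq_one hs
      have e0 : alloc s 0 (2 * p2 - 1) = (p2 - 1) + 1 := by omega
      have e1 : alloc s 1 (2 * p2 - 1) = p2 - 1 := by omega
      rw [e0, e1]
      apply odd_cmp hp2'
      calc (((p2 - 1 : ℕ)) : NNReal) + c < (((p2 - 1 : ℕ)) : NNReal) + 1 := (add_lt_add_iff_left _).mpr hclt
        _ = ((p2 - 1 + 1 : ℕ) : NNReal) := by push_cast; ring
        _ = (p2 : NNReal) := by congr 1; omega
    have s2 : s (2 * p2) = 0 := by
      apply step_eq_zero hs
      have h2 : 2 * p2 = (2 * p2 - 1) + 1 := by omega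
      have e0 : alloc s 0 (2 * p2) = p2 := by
        rw [h2, alloc_succ, s1, A0]; simp; omega
      have e1 : alloc s 1 (2 * p2) = p2 := by
        rw [h2, alloc_succ, s1, A1]; simp; omega
      rw [e0, e1]
      exact ENNReal.div_le_div_right (by exact_mod_cast Nat.le_succ p2) _
    by_cases h1 : t < 2 * p2 - 1
    · exact hpat t h1
    · rcases (by omega : t = 2 * p2 - 1 ∨ t = 2 * p2) with rfl | rfl
      · rw [s1, if_neg (by omega)]
      · rw [s2, if_pos (by omega)]
  · intro hc1 t ht
    subst hc1
    have s1 : s (2 * p2 - 1) = 0 := by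
      apply step_eq_zero hs
      have e0 : alloc s 0 (2 * p2 - 1) = p2 := by omega
      have e1 : alloc s 1 (2 * p2 - 1) = p2 - 1 := by omega
      rw [e0, e1, ENNReal.coe_one]
      have r1 : ((p2 - 1 : ℕ) : ℝ≥0∞) + 1 = ((p2 : ℕ) : ℝ≥0∞) := by
        exact_mod_cast congrArg (fun n : ℕ => (n : ℝ≥0∞)) (show p2 - 1 + 1 = p2 by omega)
      have r2 : ((p2 : ℕ) : ℝ≥0∞) + 1 = ((p2 + 1 : ℕ) : ℝ≥0∞) := by
        push_cast; ring
      rw [r1, r2, ENNReal.div_self (by exact_mod_cast hp2') (by simp),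
        ENNReal.div_self (by simp) (by simp)]
    have s2 : s (2 * p2) = 1 := by
      apply step_eq_one hs
      have h2 : 2 * p2 = (2 * p2 - 1) + 1 := by omega
      have e0 : alloc s 0 (2 * p2) = p2 + 1 := by
        rw [h2, alloc_succ, s1, A0]; simp; omega
      have e1 : alloc s 1 (2 * p2) = p2 - 1 := by
        rw [h2, alloc_succ, s1, A1]; simp; omega
      rw [e0, e1, ENNReal.coe_one]
      have r1 : ((p2 - 1 : ℕ) : ℝ≥0∞) + 1 = ((p2 : ℕ) : ℝ≥0∞) := by
        exact_mod_cast congrArg (fun n : ℕ => (n : ℝ≥0∞)) (show p2 - 1 + 1 = p2 by omega)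
      have r2 : ((p2 + 1 : ℕ) : ℝ≥0∞) + 1 = ((p2 + 2 : ℕ) : ℝ≥0∞) := by
        push_cast; ring
      rw [r1, r2]
      apply nat_div_lt (by omega) hp2'
      nlinarith
    by_cases h1 : t = 2 * p2
    · rw [h1, s2, if_pos rfl]
    · rw [if_neg h1]
      by_cases h2 : t < 2 * p2 - 2
      · rw [if_pos h2]
        exact hpat t (by omega)
      · rw [if_neg h2]
        rcases (by omega : t = 2 * p2 - 2 ∨ t = 2 * p2 - 1) with rfl | rfl
        · have := hpat (2 * p2 - 2) (by omega)
          rw [if_pos (by omega)] at this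
          exact this
        · exact s1
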